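/- Let m ≥ 1 and let F : ℝ^m → ℝ be such that for each index k, when all variables other than φ_k are fixed, the resulting single-variable function φ_k ↦ F(φ) is a trigonometric polynomial of degree at most 2 (with coefficients depending on the other variables). Then the uniform average of F over [0,2π]^m equals the average of F over the 4^m Clifford points: (2π)^{−m} ∫_{[0,2π]^m} F(φ) dφ = 4^{−m} Σ_{φ_c ∈ {0, π/2, π, 3π/2}^m} F(φ_c). -/

import Mathlib

open Real MeasureTheory Set

lemma trig_avg {f : ℝ → ℝ} {a b c d e : ℝ}
    (h : ∀ t, f t = a + b * Real.cos t + c * Real.sin t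
      + d * Real.cos (2 * t) + e * Real.sin (2 * t)) :
    ∫ t in Set.Icc 0 (2 * π), f t
      = (π / 2) * ∑ x : Fin 4, f (((x : ℕ) : ℝ) * (π / 2)) := by
  have hI : ∫ t in Set.Icc 0 (2 * π), f t = ∫ t in (0:ℝ)..(2*π), f t := by
    rw [intervalIntegral.integral_of_le Real.two_pi_pos.le,
      Measure.restrict_congr_set Ioc_ae_eq_Icc]
  have hfc : Continuous f := by
    have : f = fun t => a + b * Real.cos t + c * Real.sin t
      + d * Real.cos (2 * t) + e * Real.sin (2 * t) := funext h
    rw [this]; fun_prop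
  have h2 : ∫ t in (0:ℝ)..(2*π), Real.cos (2 * t) = 0 := by
    rw [intervalIntegral.integral_comp_mul_left (fun x => Real.cos x) two_ne_zero]
    norm_num [Real.sin_eq_zero_iff_of_lt_of_lt]
    rw [show (2:ℝ) * (2 * π) = (2 * π) + (2 * π) by ring]
    simp [Real.sin_add]
  have h3 : ∫ t in (0:ℝ)..(2*π), Real.sin (2 * t) = 0 := by
    rw [intervalIntegral.integral_comp_mul_left (fun x => Real.sin x) two_ne_zero]
    norm_num
    rw [show (2:ℝ) * (2 * π) = (2 * π) + (2 * π) by ring]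
    simp [Real.cos_add, Real.sin_add]
  have key : ∫ t in (0:ℝ)..(2*π), f t = a * (2 * π) := by
    rw [intervalIntegral.integral_congr (g := fun t => a + b * Real.cos t + c * Real.sin t
      + d * Real.cos (2 * t) + e * Real.sin (2 * t)) (fun t _ => h t)]
    have i1 : IntervalIntegrable (fun t => b * Real.cos t) volume 0 (2*π) := by
      apply Continuous.intervalIntegrable; fun_prop
    have i2 : IntervalIntegrable (fun t => c * Real.sin t) volume 0 (2*π) := by
      apply Continuous.intervalIntegrable; fun_prop
    have i3 : IntervalIntegrable (fun t => d * Real.cos (2*t)) volume 0 (2*π) := by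
      apply Continuous.intervalIntegrable; fun_prop
    have i4 : IntervalIntegrable (fun t => e * Real.sin (2*t)) volume 0 (2*π) := by
      apply Continuous.intervalIntegrable; fun_prop
    rw [intervalIntegral.integral_add (by apply Continuous.intervalIntegrable; fun_prop)
        i4,
      intervalIntegral.integral_add (by apply Continuous.intervalIntegrable; fun_prop) i3,
      intervalIntegral.integral_add (by apply Continuous.intervalIntegrable; fun_prop) i2,
      intervalIntegral.integral_add (by apply Continuous.intervalIntegrable; fun_prop) i1,
      intervalIntegral.integral_const_mul, intervalIntegral.integral_const_mul,
      intervalIntegral.integral_const_mul, intervalIntegral.integral_const_mul,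
      h2, h3, integral_cos, integral_sin]
    simp
    ring
  rw [hI, key, Fin.sum_univ_four]
  rw [h, h, h, h]
  have c3 : (((3:Fin 4):ℕ):ℝ) = 3 := by norm_num [show ((3:Fin 4):ℕ)=3 from rfl]
  rw [c3]
  norm_num
  rw [show ((2:ℝ) * (π/2)) = π by ring, show ((3:ℝ) * (π/2)) = π + π/2 by ring,
    show (2:ℝ) * (π + π/2) = π + 2 * π by ring]
  simp [Real.cos_add, Real.sin_add, Real.cos_pi_div_two, Real.sin_pi_div_two]
  ring

lemma cube_avg : ∀ (m : ℕ) (F : (Fin m → ℝ) → ℝ), Continuous F →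
    (∀ (k : Fin m) (φ : Fin m → ℝ), ∃ a b c d e : ℝ, ∀ t : ℝ,
      F (Function.update φ k t)
        = a + b * Real.cos t + c * Real.sin t
          + d * Real.cos (2 * t) + e * Real.sin (2 * t)) →
    ∫ φ in Set.Icc (0 : Fin m → ℝ) (fun _ => 2 * π), F φ
      = (π / 2) ^ m * ∑ c : Fin m → Fin 4, F (fun k => ((c k : ℕ) : ℝ) * (π / 2)) := by
  intro m
  induction m with
  | zero =>
    intro F _ _
    have hs : (Set.Icc (0 : Fin 0 → ℝ) fun _ => 2 * π) = Set.univ := by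
      ext x; simp [Set.mem_Icc, Pi.le_def]
    rw [hs, Measure.restrict_univ]
    rw [show (volume : Measure (Fin 0 → ℝ)) = Measure.pi (fun _ : Fin 0 => volume) from rfl,
      Measure.pi_of_empty (fun _ : Fin 0 => volume) 0, integral_dirac]
    rw [Fintype.sum_subsingleton _ (fun i : Fin 0 => (i.elim0 : Fin 4))]
    simp only [pow_zero, one_mul]
    exact congrArg F (Subsingleton.elim _ _)
  | succ n ih =>
    intro F hFcont hF
    set e : ℝ × (Fin n → ℝ) ≃ᵐ (Fin (n + 1) → ℝ) :=
      (MeasurableEquiv.piFinSuccAbove (fun _ => ℝ) 0).symm with he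
    have hem : MeasurePreserving e :=
      (volume_preserving_piFinSuccAbove (fun _ : Fin (n + 1) => ℝ) 0).symm _
    have heπ : (e ⁻¹' Set.Icc 0 fun _ => 2 * π)
        = Set.Icc (0 : ℝ) (2 * π) ×ˢ Set.Icc (0 : Fin n → ℝ) fun _ => 2 * π :=
      ((Fin.insertNthOrderIso (fun _ => ℝ) 0).preimage_Icc _ _).trans (Icc_prod_eq _ _)
    have hFi : IntegrableOn F (Set.Icc (0 : Fin (n+1) → ℝ) fun _ => 2 * π) :=
      hFcont.continuousOn.integrableOn_compact isCompact_Icc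
    have hee : ∀ (t : ℝ) (ψ : Fin n → ℝ), e (t, ψ) = Fin.cons t ψ := by
      intro t ψ
      simp only [he, MeasurableEquiv.piFinSuccAbove_symm_apply, Fin.insertNthEquiv_zero,
        Fin.consEquiv, Equiv.coe_fn_mk, Fin.insertNth_zero]
    rw [← hem.map_eq, setIntegral_map_equiv, heπ, Measure.volume_eq_prod, setIntegral_prod]
    · have step1 : ∀ t : ℝ,
          ∫ ψ in Set.Icc (0 : Fin n → ℝ) fun _ => 2 * π, F (e (t, ψ))
            = (π / 2) ^ n * ∑ c : Fin n → Fin 4,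
              F (Fin.cons t (fun k => ((c k : ℕ) : ℝ) * (π / 2))) := by
        intro t
        have hconst : Continuous (fun ψ : Fin n → ℝ => (Fin.cons t ψ : Fin (n+1) → ℝ)) := by
          apply continuous_pi
          intro i
          refine Fin.cases ?_ (fun j => ?_) i
          · simpa using continuous_const
          · simpa using continuous_apply j
        have := ih (fun ψ => F (Fin.cons t ψ)) (hFcont.comp hconst) ?_
        · simpa only [hee] using this
        · intro k ψ
          obtain ⟨a, b, c, d, e', hco⟩ := hF k.succ (Fin.cons t ψ)
          exact ⟨a, b, c, d, e', fun s => by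
            simpa only [Fin.cons_update] using hco s⟩
      rw [setIntegral_congr_fun measurableSet_Icc (fun t _ => step1 t)]
      rw [integral_const_mul, integral_finset_sum]
      · have step2 : ∀ c : Fin n → Fin 4,
            ∫ t in Set.Icc (0:ℝ) (2 * π), F (Fin.cons t (fun k => ((c k : ℕ) : ℝ) * (π / 2)))
              = (π / 2) * ∑ x : Fin 4,
                F (Fin.cons (((x : ℕ) : ℝ) * (π / 2)) (fun k => ((c k : ℕ) : ℝ) * (π / 2))) := by
          intro c
          obtain ⟨a, b, c', d, e', hco⟩ := hF 0 (Fin.cons 0 (fun k => ((c k : ℕ) : ℝ) * (π / 2)))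
          exact trig_avg (fun s => by rw [← Fin.update_cons_zero]; exact hco s)
        rw [Finset.sum_congr rfl (fun c _ => step2 c)]
        rw [← Finset.mul_sum]
        have reindex : ∑ c' : Fin (n+1) → Fin 4, F (fun k => ((c' k : ℕ) : ℝ) * (π / 2))
            = ∑ x : Fin 4, ∑ c : Fin n → Fin 4,
              F (Fin.cons (((x : ℕ) : ℝ) * (π / 2)) (fun k => ((c k : ℕ) : ℝ) * (π / 2))) := by
          rw [← (Fin.consEquiv (fun _ => Fin 4)).sum_comp
            (fun c' => F (fun k => ((c' k : ℕ) : ℝ) * (π / 2))), Fintype.sum_prod_type]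
          refine Finset.sum_congr rfl fun x _ => Finset.sum_congr rfl fun c _ => ?_
          congr 1
          funext k
          refine Fin.cases ?_ (fun j => ?_) k <;> simp [Fin.consEquiv]
        rw [reindex, Finset.sum_comm]
        rw [pow_succ]
        ring
      · intro c _
        have hco : Continuous (fun t : ℝ =>
            F (Fin.cons t (fun k => ((c k : ℕ) : ℝ) * (π / 2)))) := by
          apply hFcont.comp
          apply continuous_pi
          intro i
          refine Fin.cases ?_ (fun j => ?_) i
          · simpa using continuous_id'
          · simpa using continuous_const
        exact hco.continuousOn.integrableOn_compact isCompact_Icc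
    · rwa [← hem.integrableOn_comp_preimage e.measurableEmbedding, heπ] at hFi

theorem stmt_1 (m : ℕ) (hm : 1 ≤ m) (F : (Fin m → ℝ) → ℝ) (hFcont : Continuous F)
    (hF : ∀ (k : Fin m) (φ : Fin m → ℝ), ∃ a b c d e : ℝ, ∀ t : ℝ,
      F (Function.update φ k t)
        = a + b * Real.cos t + c * Real.sin t
          + d * Real.cos (2 * t) + e * Real.sin (2 * t)) :
    (1 / (2 * Real.pi) ^ m) *
        ∫ φ in Set.univ.pi (fun _ : Fin m => Set.Icc (0:ℝ) (2 * Real.pi)), F φ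
      = (1 / 4 ^ m) *
        ∑ c : Fin m → Fin 4, F (fun k => ((c k : ℕ) : ℝ) * (Real.pi / 2)) := by
  have hs : Set.univ.pi (fun _ : Fin m => Set.Icc (0:ℝ) (2 * Real.pi))
      = Set.Icc (0 : Fin m → ℝ) (fun _ => 2 * π) := Set.pi_univ_Icc _ _
  rw [hs, cube_avg m F hFcont hF, ← mul_assoc]
  have h4 : (1 / (2 * π) ^ m) * (π / 2) ^ m = 1 / 4 ^ m := by
    rw [one_div, one_div, inv_mul_eq_div, ← div_pow, ← inv_pow, inv_eq_one_div]
    congr 1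
    rw [div_eq_div_iff (by positivity) (by norm_num)]
    ring
  rw [h4]
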